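/- In a reduction sequence from a 4-regular planar multigraph G to a simple graph G₀ by loop deletions (E₁), single-copy deletions of double edges (E₂, E₃), and deletions of pairs of parallel edges (E₄), each vertex of degree 1 in G₀ either carried exactly one loop and one doubled copy of its incident edge in G, or G is the two-vertex multigraph with a quadruple edge reduced to a single edge (equivalently: in G, a vertex whose reduction has degree 1 had its remaining three edge-ends filled by one loop (2 ends) plus one extra copy of its edge (1 end), unless all three extra ends were copies of the same edge, forcing the other endpoint also to have reduced degree 1). -/
import Mathlib

/-- The degree of a vertex `v` in the multigraph whose edge multiset is `m`:
each edge incidence counts once, a loop at `v` counts twice. -/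
def mdeg {V : Type*} [DecidableEq V] (m : Multiset (Sym2 V)) (v : V) : ℕ :=
  (m.map (fun e => Sym2.lift
    ⟨fun a b => (if a = v then 1 else 0) + (if b = v then 1 else 0),
      fun _ _ => add_comm _ _⟩ e)).sum

private lemma inc_pos {V : Type*} [DecidableEq V] (v : V) (e : Sym2 V) (h : v ∈ e) :
    0 < Sym2.lift
    ⟨fun a b => (if a = v then 1 else 0) + (if b = v then 1 else 0),
      fun _ _ => add_comm _ _⟩ e := by
  induction e using Sym2.ind with
  | _ a b =>
    rw [Sym2.mem_iff] at h
    simp only [Sym2.lift_mk]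
    rcases h with h | h <;> simp [h]

private lemma mdeg_cons {V : Type*} [DecidableEq V] (a : Sym2 V) (m : Multiset (Sym2 V))
    (v : V) : mdeg (a ::ₘ m) v = (Sym2.lift
    ⟨fun x y => (if x = v then 1 else 0) + (if y = v then 1 else 0),
      fun _ _ => add_comm _ _⟩ a) + mdeg m v := by
  simp [mdeg]

private lemma mdeg_pos_of_mem {V : Type*} [DecidableEq V] {m : Multiset (Sym2 V)}
    {e : Sym2 V} {v : V} (he : e ∈ m) (hv : v ∈ e) : 0 < mdeg m v := by
  obtain ⟨m', rfl⟩ := Multiset.exists_cons_of_mem he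
  rw [mdeg_cons]
  exact lt_of_lt_of_le (inc_pos v e hv) (Nat.le_add_right _ _)



/-- The edge multiset of the expanded multigraph: the base edges `m₀`, together with
`l v` loops at each vertex `v` (an `E₁` move contributes 2 to `deg v`), `d e + c e`
extra copies of each edge `e` (an `E₂`/`E₃` doubling contributes 1 to each endpoint),
and `2 * p e` extra copies of `e` for pair insertions (an `E₄` move contributes 2 to
each endpoint). -/
def expandedEdges {V : Type*} [Fintype V] [DecidableEq V]
    (m₀ : Multiset (Sym2 V)) (l : V → ℕ) (d c p : Sym2 V → ℕ) : Multiset (Sym2 V) :=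
  m₀ + (Finset.univ.val.bind fun v : V => Multiset.replicate (l v) s(v, v))
    + ((Finset.univ : Finset (Sym2 V)).val.bind fun e =>
        Multiset.replicate (d e + c e + 2 * p e) e)

/-- Consider a reduction of a 4-regular planar multigraph `G` to a
simple graph `G₀` (base edge multiset `m₀`, no loops) using loop deletions (`E₁`, one
loop `l v ≤ 1` per vertex), deletions of extra copies of base edges (`E₂`/`E₃`,
`d e + c e` extra copies of the base edge `e`), and deletions of inserted pairs of
parallel edges (`E₄`, `p e` pairs, only between vertices of degree 2 in `G₀`).  Since
`G` was 4-regular, the vertex degree equations hold at every vertex.  Then for every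
vertex `v` of degree 1 in `G₀`, with (unique) incident base edge `s(v, w)`: either `v`
carried exactly one loop and exactly one extra copy of its incident edge in `G` (and no
inserted pairs), or the three missing edge-ends at `v` were all extra copies of the
single incident edge — which forces the other endpoint `w` also to have degree 1 in
`G₀` (the case where `G` is the two-vertex multigraph with a quadruple edge). -/
theorem degree_one_vertex_dichotomy {V : Type*} [Fintype V] [DecidableEq V]
    (m₀ : Multiset (Sym2 V)) (l : V → ℕ) (d c p : Sym2 V → ℕ)
    (hnoloop : ∀ v : V, s(v, v) ∉ m₀)
    (hl : ∀ v : V, l v ≤ 1)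
    (hsupp : ∀ e : Sym2 V, 0 < d e + c e → e ∈ m₀)
    (hpdeg : ∀ e : Sym2 V, 0 < p e → ∀ u ∈ e, mdeg m₀ u = 2)
    (hdeg : ∀ u : V, mdeg m₀ u + 2 * l u + (∑ e : Sym2 V, if u ∈ e then d e else 0)
        + (∑ e : Sym2 V, if u ∈ e then c e else 0)
        + 2 * (∑ e : Sym2 V, if u ∈ e then p e else 0) = 4)
    (v w : V) (hvw : v ≠ w) (he₀ : s(v, w) ∈ m₀) (hv1 : mdeg m₀ v = 1) :
    (l v = 1 ∧ d s(v, w) + c s(v, w) = 1 ∧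
      (∑ e : Sym2 V, if v ∈ e then p e else 0) = 0) ∨
    (l v = 0 ∧ d s(v, w) + c s(v, w) = 3 ∧ mdeg m₀ w = 1) := by
  -- decompose m₀ at the edge s(v,w)
  obtain ⟨m', hm'⟩ := Multiset.exists_cons_of_mem he₀
  have hincv : (Sym2.lift
      ⟨fun x y => (if x = v then 1 else 0) + (if y = v then 1 else 0),
        fun _ _ => add_comm _ _⟩ s(v, w)) = 1 := by
    simp [Sym2.lift_mk, hvw.symm]
  have hm'v : mdeg m' v = 0 := by
    have := hv1
    rw [hm', mdeg_cons, hincv] at this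
    omega
  -- the unique edge at v
  have huniq : ∀ e : Sym2 V, v ∈ e → e ≠ s(v, w) → e ∉ m₀ := by
    intro e hv he hmem
    rw [hm', Multiset.mem_cons] at hmem
    rcases hmem with h | h
    · exact he h
    · have : 0 < mdeg m' v := mdeg_pos_of_mem h hv
      omega
  have hDv : (∑ e : Sym2 V, if v ∈ e then d e else 0) = d s(v, w) := by
    rw [Finset.sum_eq_single s(v, w)]
    · simp
    · intro e _ hne
      by_cases hv : v ∈ e
      · simp only [if_pos hv]
        by_contra hd
        exact huniq e hv hne (hsupp e (by omega))
      · simp [hv]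
    · simp
  have hCv : (∑ e : Sym2 V, if v ∈ e then c e else 0) = c s(v, w) := by
    rw [Finset.sum_eq_single s(v, w)]
    · simp
    · intro e _ hne
      by_cases hv : v ∈ e
      · simp only [if_pos hv]
        by_contra hc
        exact huniq e hv hne (hsupp e (by omega))
      · simp [hv]
    · simp
  have hPv : (∑ e : Sym2 V, if v ∈ e then p e else 0) = 0 := by
    apply Finset.sum_eq_zero
    intro e _
    by_cases hv : v ∈ e
    · simp only [if_pos hv]
      by_contra hp
      have := hpdeg e (by omega) v hv
      omega
    · simp [hv]
  have hdv := hdeg v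
  rw [hv1, hDv, hCv, hPv] at hdv
  have hlv := hl v
  rcases Nat.lt_or_ge (l v) 1 with hcase | hcase
  · right
    have hlv0 : l v = 0 := by omega
    have hdc3 : d s(v, w) + c s(v, w) = 3 := by omega
    refine ⟨hlv0, hdc3, ?_⟩
    have hw1 : 0 < mdeg m₀ w := mdeg_pos_of_mem he₀ (by simp)
    have hDw : d s(v, w) ≤ ∑ e : Sym2 V, if w ∈ e then d e else 0 := by
      have := Finset.single_le_sum (f := fun e : Sym2 V => if w ∈ e then d e else 0)
        (fun e _ => Nat.zero_le _) (Finset.mem_univ s(v, w))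
      simpa using this
    have hCw : c s(v, w) ≤ ∑ e : Sym2 V, if w ∈ e then c e else 0 := by
      have := Finset.single_le_sum (f := fun e : Sym2 V => if w ∈ e then c e else 0)
        (fun e _ => Nat.zero_le _) (Finset.mem_univ s(v, w))
      simpa using this
    have hdw := hdeg w
    omega
  · left
    exact ⟨by omega, by omega, hPv⟩
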